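/- Let A be an n×n 0-1 matrix with A^k = A for some integer k ≥ 2. Then the number f(A) of nonzero entries of A satisfies f(A) ≤ γ(n), where γ(n) = (n+1)²/4 if n is odd and γ(n) = (n²+2n)/4 if n is even. -/

import Mathlib

open Matrix

/-- A 0-1 matrix over the integers. -/
def IsZeroOne {α β : Type*} (A : Matrix α β ℤ) : Prop :=
  ∀ i j, A i j = 0 ∨ A i j = 1

/-- The number of nonzero entries of a matrix. -/
def fcount {α β : Type*} [Fintype α] [Fintype β] (A : Matrix α β ℤ) : ℕ :=
  (Finset.univ.filter fun p : α × β => A p.1 p.2 ≠ 0).card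

/-- γ(n) = (n+1)²/4 if n is odd and (n²+2n)/4 if n is even. -/
def gamma (n : ℕ) : ℕ := if Odd n then (n + 1) ^ 2 / 4 else (n ^ 2 + 2 * n) / 4

namespace Stmt13Aux

open Finset
open scoped Classical

variable {n : ℕ}

/-- row-positive -/
def Rp (A : Matrix (Fin n) (Fin n) ℤ) (i : Fin n) : Prop := ∃ j, A i j ≠ 0
/-- column-positive -/
def Cp (A : Matrix (Fin n) (Fin n) ℤ) (i : Fin n) : Prop := ∃ j, A j i ≠ 0
def Xp (A : Matrix (Fin n) (Fin n) ℤ) (i : Fin n) : Prop := Rp A i ∧ Cp A i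

noncomputable def Ax (A : Matrix (Fin n) (Fin n) ℤ) : Matrix (Fin n) (Fin n) ℤ :=
  Matrix.of fun i j => if Xp A i ∧ Xp A j then A i j else 0

section basic

variable {A : Matrix (Fin n) (Fin n) ℤ}

lemma nonneg (h01 : ∀ i j, A i j = 0 ∨ A i j = 1) (i j : Fin n) : 0 ≤ A i j := by
  rcases h01 i j with h | h <;> simp [h]

lemma le_one (h01 : ∀ i j, A i j = 0 ∨ A i j = 1) (i j : Fin n) : A i j ≤ 1 := by
  rcases h01 i j with h | h <;> simp [h]

lemma Ax_apply (A : Matrix (Fin n) (Fin n) ℤ) (i j : Fin n) :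
    Ax A i j = if Xp A i ∧ Xp A j then A i j else 0 := rfl

lemma Ax_ne (i j : Fin n) (h : Ax A i j ≠ 0) : Xp A i ∧ Xp A j ∧ Ax A i j = A i j := by
  by_cases hx : Xp A i ∧ Xp A j
  · refine ⟨hx.1, hx.2, ?_⟩
    rw [Ax_apply, if_pos hx]
  · rw [Ax_apply, if_neg hx] at h
    exact absurd rfl h

lemma Ax_nonneg (h01 : ∀ i j, A i j = 0 ∨ A i j = 1) (i j : Fin n) : 0 ≤ Ax A i j := by
  rw [Ax_apply]; split
  · exact nonneg h01 i j
  · exact le_refl 0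

lemma mul_apply_ne {M N : Matrix (Fin n) (Fin n) ℤ} {i j : Fin n} (h : (M * N) i j ≠ 0) :
    ∃ u, M i u ≠ 0 ∧ N u j ≠ 0 := by
  rw [Matrix.mul_apply] at h
  by_contra hc
  push_neg at hc
  apply h
  apply Finset.sum_eq_zero
  intro u _
  rcases Classical.em (M i u = 0) with h1 | h1
  · simp [h1]
  · simp [hc u h1]

lemma pow_nonneg_entry (h01 : ∀ i j, A i j = 0 ∨ A i j = 1) (M : Matrix (Fin n) (Fin n) ℤ)
    (hM : ∀ i j, 0 ≤ M i j) (m : ℕ) (i j : Fin n) : 0 ≤ (M ^ m) i j := by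
  induction m generalizing i j with
  | zero => simp [Matrix.one_apply]; split <;> simp
  | succ m ih =>
    rw [pow_succ, Matrix.mul_apply]
    exact Finset.sum_nonneg fun u _ => mul_nonneg (ih i u) (hM u j)

/-- support of powers of Ax -/
lemma powAx_supp (m : ℕ) (hm : 1 ≤ m) (i j : Fin n) (h : (Ax A ^ m) i j ≠ 0) :
    Xp A i ∧ Xp A j := by
  induction m generalizing j with
  | zero => omega
  | succ m ih =>
    rw [pow_succ] at h
    obtain ⟨u, h1, h2⟩ := mul_apply_ne h
    rcases Nat.eq_or_lt_of_le hm with h3 | h3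
    · -- m = 0
      have hm0 : m = 0 := by omega
      subst hm0
      rw [pow_zero, Matrix.one_apply] at h1
      have hiu : i = u := by by_contra hne; simp [hne] at h1
      subst hiu
      obtain ⟨hx1, hx2, _⟩ := Ax_ne _ _ h2
      exact ⟨hx1, hx2⟩
    · have hm1 : 1 ≤ m := by omega
      obtain ⟨hxi, hxu⟩ := ih hm1 u h1
      obtain ⟨_, hxj, _⟩ := Ax_ne _ _ h2
      exact ⟨hxi, hxj⟩


lemma step_a (h01 : ∀ i j, A i j = 0 ∨ A i j = 1) (v l : Fin n) (hv : Cp A v) :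
    (A * A) v l = (Ax A * A) v l := by
  rw [Matrix.mul_apply, Matrix.mul_apply]
  apply Finset.sum_congr rfl
  intro w _
  rcases Classical.em (A v w = 0) with h1 | h1
  · rw [Ax_apply]
    split <;> simp [h1]
  rcases Classical.em (A w l = 0) with h2 | h2
  · rw [h2]; ring
  have hxv : Xp A v := ⟨⟨w, h1⟩, hv⟩
  have hxw : Xp A w := ⟨⟨l, h2⟩, ⟨v, h1⟩⟩
  rw [Ax_apply, if_pos ⟨hxv, hxw⟩]

lemma step_b (j : ℕ) (i v : Fin n) (h : (A * Ax A ^ j) i v ≠ 0) : Cp A v := by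
  obtain ⟨u, h1, h2⟩ := mul_apply_ne h
  rcases Nat.eq_zero_or_pos j with hj | hj
  · subst hj
    rw [pow_zero, Matrix.one_apply] at h2
    have huv : u = v := by by_contra hne; simp [hne] at h2
    subst huv
    exact ⟨i, h1⟩
  · exact (powAx_supp j hj u v h2).2.2

lemma step_c (h01 : ∀ i j, A i j = 0 ∨ A i j = 1) (j : ℕ) :
    A * Ax A ^ j * (A * A) = A * Ax A ^ j * (Ax A * A) := by
  ext i l
  rw [Matrix.mul_apply, Matrix.mul_apply]
  apply Finset.sum_congr rfl
  intro v _
  rcases Classical.em ((A * Ax A ^ j) i v = 0) with h1 | h1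
  · rw [h1]; ring
  · rw [step_a h01 v l (step_b j i v h1)]

lemma master_aux (h01 : ∀ i j, A i j = 0 ∨ A i j = 1) (d : ℕ) :
    A ^ (d + 2) = A * Ax A ^ d * A := by
  induction d with
  | zero => rw [pow_zero, mul_one, pow_two]
  | succ d ih =>
    have : A ^ (d + 3) = A ^ (d + 2) * A := by rw [← pow_succ]
    rw [show d + 1 + 2 = d + 3 by ring, this, ih]
    calc A * Ax A ^ d * A * A = A * Ax A ^ d * (A * A) := by rw [mul_assoc]
      _ = A * Ax A ^ d * (Ax A * A) := step_c h01 d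
      _ = A * (Ax A ^ d * Ax A) * A := by rw [mul_assoc, mul_assoc, mul_assoc]
      _ = A * Ax A ^ (d + 1) * A := by rw [← pow_succ]

lemma master {K : ℕ} (h01 : ∀ i j, A i j = 0 ∨ A i j = 1) (hK : 3 ≤ K) (hA : A ^ K = A) :
    A = A * Ax A ^ (K - 2) * A := by
  have h2 : K - 2 + 2 = K := by omega
  calc A = A ^ K := hA.symm
    _ = A ^ (K - 2 + 2) := by rw [h2]
    _ = A * Ax A ^ (K - 2) * A := master_aux h01 (K - 2)

end basic


section main

variable {A : Matrix (Fin n) (Fin n) ℤ} {K : ℕ}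

lemma triple_apply (M P N : Matrix (Fin n) (Fin n) ℤ) (i j : Fin n) :
    (M * P * N) i j = ∑ v, ∑ u, M i u * P u v * N v j := by
  rw [Matrix.mul_apply]
  apply Finset.sum_congr rfl
  intro v _
  rw [Matrix.mul_apply, Finset.sum_mul]

lemma out_neighbor (h01 : ∀ i j, A i j = 0 ∨ A i j = 1) (hK : 3 ≤ K) (hA : A ^ K = A)
    (v : Fin n) (hv : Xp A v) : ∃ u, Xp A u ∧ Ax A v u = 1 := by
  obtain ⟨w, hw⟩ := hv.1
  rw [master h01 hK hA] at hw
  obtain ⟨u2, h1, h2⟩ := mul_apply_ne hw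
  obtain ⟨u, h3, h4⟩ := mul_apply_ne h1
  have hxu : Xp A u := (powAx_supp (K - 2) (by omega) u u2 h4).1
  refine ⟨u, hxu, ?_⟩
  rw [Ax_apply, if_pos ⟨hv, hxu⟩]
  rcases h01 v u with h | h
  · exact absurd h h3
  · exact h

lemma in_neighbor (h01 : ∀ i j, A i j = 0 ∨ A i j = 1) (hK : 3 ≤ K) (hA : A ^ K = A)
    (u : Fin n) (hu : Xp A u) : ∃ v, Xp A v ∧ Ax A v u = 1 := by
  obtain ⟨w, hw⟩ := hu.2
  rw [master h01 hK hA] at hw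
  obtain ⟨u2, h1, h2⟩ := mul_apply_ne hw
  obtain ⟨u1, h3, h4⟩ := mul_apply_ne h1
  have hxu2 : Xp A u2 := (powAx_supp (K - 2) (by omega) u1 u2 h4).2
  refine ⟨u2, hxu2, ?_⟩
  rw [Ax_apply, if_pos ⟨hxu2, hu⟩]
  rcases h01 u2 u with h | h
  · exact absurd h h2
  · exact h

lemma AxK (h01 : ∀ i j, A i j = 0 ∨ A i j = 1) (hK : 3 ≤ K) (hA : A ^ K = A) :
    Ax A ^ K = Ax A := by
  have hsplit : Ax A ^ K = Ax A * Ax A ^ (K - 2) * Ax A := by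
    have h1 : Ax A * Ax A ^ (K - 2) * Ax A = Ax A ^ (1 + (K - 2) + 1) := by
      rw [pow_add, pow_add, pow_one]
    rw [h1, show 1 + (K - 2) + 1 = K by omega]
  ext i j
  by_cases hx : Xp A i ∧ Xp A j
  · rw [hsplit, triple_apply]
    have hAij : A i j = (A * Ax A ^ (K - 2) * A) i j := by rw [← master h01 hK hA]
    rw [triple_apply] at hAij
    have : (∑ v, ∑ u, Ax A i u * (Ax A ^ (K - 2)) u v * Ax A v j)
        = ∑ v, ∑ u, A i u * (Ax A ^ (K - 2)) u v * A v j := by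
      apply Finset.sum_congr rfl; intro v _
      apply Finset.sum_congr rfl; intro u _
      rcases Classical.em ((Ax A ^ (K - 2)) u v = 0) with hp | hp
      · rw [hp]; ring
      · obtain ⟨hxu, hxv⟩ := powAx_supp (K - 2) (by omega) u v hp
        rw [Ax_apply, if_pos ⟨hx.1, hxu⟩, Ax_apply, if_pos ⟨hxv, hx.2⟩]
    rw [this, ← hAij, Ax_apply, if_pos hx]
  · have h2 : Ax A i j = 0 := by rw [Ax_apply, if_neg hx]
    rw [h2]
    by_contra hne
    exact hx (powAx_supp K (by omega) i j hne)

lemma srow_expand (m : ℕ) (v : Fin n) :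
    (∑ u, (Ax A ^ (m + 1)) v u) = ∑ w, Ax A v w * ∑ u, (Ax A ^ m) w u := by
  rw [pow_succ']
  simp only [Matrix.mul_apply]
  rw [Finset.sum_comm]
  apply Finset.sum_congr rfl
  intro w _
  rw [Finset.mul_sum]


lemma t_ge_one (h01 : ∀ i j, A i j = 0 ∨ A i j = 1) (hK : 3 ≤ K) (hA : A ^ K = A)
    (w : Fin n) (hw : Xp A w) : 1 ≤ ∑ u, Ax A w u := by
  obtain ⟨u, _, hu⟩ := out_neighbor h01 hK hA w hw
  calc (1 : ℤ) = Ax A w u := hu.symm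
    _ ≤ ∑ u, Ax A w u :=
      Finset.single_le_sum (fun i _ => Ax_nonneg h01 w i) (Finset.mem_univ u)

lemma srow_expand2 (m : ℕ) (v : Fin n) :
    (∑ u, (Ax A ^ (m + 1)) v u) = ∑ w, (Ax A ^ m) v w * ∑ u, Ax A w u := by
  rw [pow_succ]
  simp only [Matrix.mul_apply]
  rw [Finset.sum_comm]
  apply Finset.sum_congr rfl
  intro w _
  rw [Finset.mul_sum]

lemma srow_mono (h01 : ∀ i j, A i j = 0 ∨ A i j = 1) (hK : 3 ≤ K) (hA : A ^ K = A)
    (m : ℕ) (hm : 1 ≤ m) (v : Fin n) :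
    (∑ u, (Ax A ^ m) v u) ≤ ∑ u, (Ax A ^ (m + 1)) v u := by
  rw [srow_expand2]
  apply Finset.sum_le_sum
  intro w _
  rcases Classical.em ((Ax A ^ m) v w = 0) with h | h
  · rw [h, zero_mul]
  · have hxw : Xp A w := (powAx_supp m hm v w h).2
    exact le_mul_of_one_le_right (pow_nonneg_entry h01 (Ax A) (Ax_nonneg h01) m v w)
      (t_ge_one h01 hK hA w hxw)

lemma srow_chain (h01 : ∀ i j, A i j = 0 ∨ A i j = 1) (hK : 3 ≤ K) (hA : A ^ K = A)
    (m : ℕ) (hm : 2 ≤ m) (v : Fin n) :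
    (∑ u, (Ax A ^ 2) v u) ≤ ∑ u, (Ax A ^ m) v u := by
  induction m with
  | zero => omega
  | succ m ih =>
    rcases Nat.lt_or_ge m 2 with h | h
    · have : m + 1 = 2 := by omega
      rw [this]
    · exact le_trans (ih h) (srow_mono h01 hK hA m (by omega) v)

lemma srow2_eq (h01 : ∀ i j, A i j = 0 ∨ A i j = 1) (hK : 3 ≤ K) (hA : A ^ K = A)
    (v : Fin n) : (∑ u, (Ax A ^ 2) v u) = ∑ u, Ax A v u := by
  apply le_antisymm
  · calc (∑ u, (Ax A ^ 2) v u) ≤ ∑ u, (Ax A ^ K) v u := srow_chain h01 hK hA K (by omega) v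
      _ = ∑ u, Ax A v u := by rw [AxK h01 hK hA]
  · calc (∑ u, Ax A v u) = ∑ u, (Ax A ^ 1) v u := by rw [pow_one]
      _ ≤ ∑ u, (Ax A ^ (1 + 1)) v u := srow_mono h01 hK hA 1 le_rfl v
      _ = ∑ u, (Ax A ^ 2) v u := rfl

lemma hkey (h01 : ∀ i j, A i j = 0 ∨ A i j = 1) (hK : 3 ≤ K) (hA : A ^ K = A)
    (v w : Fin n) (hvw : Ax A v w ≠ 0) : (∑ u, Ax A w u) = 1 := by
  have h2 : (∑ w, Ax A v w * ∑ u, Ax A w u) = ∑ w, Ax A v w := by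
    have e1 := srow_expand2 (A := A) 1 v
    simp only [pow_one] at e1
    rw [← e1]
    exact srow2_eq h01 hK hA v
  have h3 : (∑ w, Ax A v w * ((∑ u, Ax A w u) - 1)) = 0 := by
    have : ∀ w, Ax A v w * ((∑ u, Ax A w u) - 1)
        = Ax A v w * (∑ u, Ax A w u) - Ax A v w := by
      intro w; ring
    rw [Finset.sum_congr rfl (fun w _ => this w), Finset.sum_sub_distrib, h2, sub_self]
  have h4 : ∀ w ∈ Finset.univ, 0 ≤ Ax A v w * ((∑ u, Ax A w u) - 1) := by
    intro w _
    rcases Classical.em (Ax A v w = 0) with h | h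
    · rw [h, zero_mul]
    · have hxw : Xp A w := (Ax_ne v w h).2.1
      exact mul_nonneg (Ax_nonneg h01 v w) (by linarith [t_ge_one h01 hK hA w hxw])
  have h5 := (Finset.sum_eq_zero_iff_of_nonneg h4).mp h3 w (Finset.mem_univ w)
  rcases mul_eq_zero.mp h5 with h | h
  · exact absurd h hvw
  · linarith

lemma rowsum_one (h01 : ∀ i j, A i j = 0 ∨ A i j = 1) (hK : 3 ≤ K) (hA : A ^ K = A)
    (u : Fin n) (hu : Xp A u) : (∑ w, Ax A u w) = 1 := by
  obtain ⟨v, _, hv⟩ := in_neighbor h01 hK hA u hu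
  exact hkey h01 hK hA v u (by rw [hv]; norm_num)

lemma Xp_transpose (i : Fin n) : Xp Aᵀ i ↔ Xp A i := by
  constructor
  · rintro ⟨h1, h2⟩; exact ⟨h2, h1⟩
  · rintro ⟨h1, h2⟩; exact ⟨h2, h1⟩

lemma Ax_transpose : Ax Aᵀ = (Ax A)ᵀ := by
  ext i j
  show (if Xp Aᵀ i ∧ Xp Aᵀ j then Aᵀ i j else 0) = Ax A j i
  rw [Ax_apply]
  by_cases h : Xp A j ∧ Xp A i
  · rw [if_pos ⟨(Xp_transpose i).mpr h.2, (Xp_transpose j).mpr h.1⟩, if_pos h]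
    rfl
  · rw [if_neg, if_neg h]
    intro hc
    exact h ⟨(Xp_transpose j).mp hc.2, (Xp_transpose i).mp hc.1⟩

lemma colsum_one (h01 : ∀ i j, A i j = 0 ∨ A i j = 1) (hK : 3 ≤ K) (hA : A ^ K = A)
    (u : Fin n) (hu : Xp A u) : (∑ v, Ax A v u) = 1 := by
  have h01T : ∀ i j, Aᵀ i j = 0 ∨ Aᵀ i j = 1 := fun i j => h01 j i
  have hAT : Aᵀ ^ K = Aᵀ := by rw [← Matrix.transpose_pow, hA]
  have := rowsum_one h01T hK hAT u ((Xp_transpose u).mpr hu)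
  rw [Ax_transpose] at this
  exact this

lemma Prow (h01 : ∀ i j, A i j = 0 ∨ A i j = 1) (hK : 3 ≤ K) (hA : A ^ K = A)
    (m : ℕ) (v : Fin n) (hv : Xp A v) : (∑ u, (Ax A ^ m) v u) = 1 := by
  induction m generalizing v with
  | zero => simp [Matrix.one_apply]
  | succ m ih =>
    rw [srow_expand]
    have : ∀ w ∈ Finset.univ, Ax A v w * (∑ u, (Ax A ^ m) w u) = Ax A v w := by
      intro w _
      rcases Classical.em (Ax A v w = 0) with h | h
      · rw [h, zero_mul]
      · rw [ih w (Ax_ne v w h).2.1, mul_one]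
    rw [Finset.sum_congr rfl this]
    exact rowsum_one h01 hK hA v hv

lemma Pcol (h01 : ∀ i j, A i j = 0 ∨ A i j = 1) (hK : 3 ≤ K) (hA : A ^ K = A)
    (m : ℕ) (u : Fin n) (hu : Xp A u) : (∑ v, (Ax A ^ m) v u) = 1 := by
  have h01T : ∀ i j, Aᵀ i j = 0 ∨ Aᵀ i j = 1 := fun i j => h01 j i
  have hAT : Aᵀ ^ K = Aᵀ := by rw [← Matrix.transpose_pow, hA]
  have := Prow h01T hK hAT m u ((Xp_transpose u).mpr hu)
  rw [Ax_transpose, ← Matrix.transpose_pow] at this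
  exact this


lemma sum_mul_sum (s t : Finset (Fin n)) (f g : Fin n → ℤ) (z : ℤ) :
    (∑ i ∈ s, f i) * z * (∑ j ∈ t, g j) = ∑ i ∈ s, ∑ j ∈ t, f i * z * g j := by
  rw [Finset.sum_mul, Finset.sum_mul]
  apply Finset.sum_congr rfl
  intro i _
  rw [Finset.mul_sum]

lemma sum_swap4 (s t w r : Finset (Fin n)) (F : Fin n → Fin n → Fin n → Fin n → ℤ) :
    (∑ i ∈ s, ∑ j ∈ t, ∑ v ∈ w, ∑ u ∈ r, F i j v u)
      = ∑ v ∈ w, ∑ u ∈ r, ∑ i ∈ s, ∑ j ∈ t, F i j v u := by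
  have h1 : ∀ i ∈ s, (∑ j ∈ t, ∑ v ∈ w, ∑ u ∈ r, F i j v u)
      = ∑ v ∈ w, ∑ j ∈ t, ∑ u ∈ r, F i j v u := fun i _ => Finset.sum_comm
  rw [Finset.sum_congr rfl h1, Finset.sum_comm]
  apply Finset.sum_congr rfl
  intro v _
  have h2 : ∀ i ∈ s, (∑ j ∈ t, ∑ u ∈ r, F i j v u)
      = ∑ u ∈ r, ∑ j ∈ t, F i j v u := fun i _ => Finset.sum_comm
  rw [Finset.sum_congr rfl h2, Finset.sum_comm]

lemma fcount_cast (h01 : ∀ i j, A i j = 0 ∨ A i j = 1) :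
    (fcount A : ℤ) = ∑ i, ∑ j, A i j := by
  classical
  have h1 : (∑ i, ∑ j, A i j) = ∑ p : Fin n × Fin n, A p.1 p.2 := by
    exact (Fintype.sum_prod_type' (fun i j => A i j)).symm
  rw [h1, ← Finset.sum_filter_add_sum_filter_not Finset.univ
    (fun p : Fin n × Fin n => A p.1 p.2 ≠ 0) (fun p => A p.1 p.2)]
  have h2 : (∑ p ∈ Finset.univ.filter (fun p : Fin n × Fin n => A p.1 p.2 ≠ 0), A p.1 p.2)
      = ∑ p ∈ Finset.univ.filter (fun p : Fin n × Fin n => A p.1 p.2 ≠ 0), (1 : ℤ) := by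
    apply Finset.sum_congr rfl
    intro p hp
    have := (Finset.mem_filter.mp hp).2
    rcases h01 p.1 p.2 with h | h
    · exact absurd h this
    · exact h
  have h3 : (∑ p ∈ Finset.univ.filter (fun p : Fin n × Fin n => ¬ A p.1 p.2 ≠ 0), A p.1 p.2)
      = 0 := by
    apply Finset.sum_eq_zero
    intro p hp
    have := (Finset.mem_filter.mp hp).2
    push_neg at this
    exact this
  rw [h2, h3, add_zero, Finset.sum_const, fcount]
  simp


lemma prod_le (a b N : ℕ) (h : a + b ≤ N + 1) : a * b ≤ (N + 1) ^ 2 / 4 := by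
  rw [Nat.le_div_iff_mul_le (by norm_num)]
  zify
  have h' : (a : ℤ) + b ≤ (N : ℤ) + 1 := by exact_mod_cast h
  nlinarith [sq_nonneg ((a : ℤ) - b), sq_nonneg ((a : ℤ) + b)]

lemma gamma_eq (n : ℕ) : gamma n = (n + 1) ^ 2 / 4 := by
  rw [gamma]
  split
  · rfl
  · next hodd =>
    rw [Nat.not_odd_iff_even] at hodd
    obtain ⟨t, rfl⟩ := hodd
    have h1 : (t + t + 1) ^ 2 = 4 * (t * t + t) + 1 := by ring
    have h2 : (t + t) ^ 2 + 2 * (t + t) = 4 * (t * t + t) := by ring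
    omega

lemma main (h01 : ∀ i j, A i j = 0 ∨ A i j = 1) (hK : 3 ≤ K) (hA : A ^ K = A) :
    fcount A ≤ gamma n := by
  classical
  set P := Ax A ^ (K - 2) with hPdef
  set XS := Finset.univ.filter (fun i => Xp A i) with hXSdef
  set SS := Finset.univ.filter (fun i => Rp A i ∧ ¬ Cp A i) with hSSdef
  set TS := Finset.univ.filter (fun i => Cp A i ∧ ¬ Rp A i) with hTSdef
  set a : Fin n → ℤ := fun u => ∑ i ∈ SS, A i u with hadef
  set b : Fin n → ℤ := fun v => ∑ j ∈ TS, A v j with hbdef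
  have hPnn : ∀ u v, 0 ≤ P u v := pow_nonneg_entry h01 (Ax A) (Ax_nonneg h01) (K - 2)
  have hPsupp : ∀ u v, P u v ≠ 0 → Xp A u ∧ Xp A v := powAx_supp (K - 2) (by omega)
  have hAPA : ∀ i j, A i j = ∑ v, ∑ u, A i u * P u v * A v j := by
    intro i j
    conv_lhs => rw [master h01 hK hA]
    exact triple_apply A P A i j
  -- column sums
  have hcu : ∀ u, Xp A u → (∑ i, A i u) = 1 + a u := by
    intro u hu
    rw [← Finset.sum_filter_add_sum_filter_not Finset.univ (fun i => Xp A i) (fun i => A i u)]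
    have p1 : (∑ i ∈ Finset.univ.filter (fun i => Xp A i), A i u) = 1 := by
      have e1 : ∀ i ∈ Finset.univ.filter (fun i => Xp A i), A i u = Ax A i u := by
        intro i hi
        rw [Ax_apply, if_pos ⟨(Finset.mem_filter.mp hi).2, hu⟩]
      rw [Finset.sum_congr rfl e1,
        Finset.sum_subset (Finset.filter_subset _ _) (fun i _ hi => ?_)]
      · exact colsum_one h01 hK hA u hu
      · rw [Ax_apply, if_neg]
        intro hc
        exact hi (Finset.mem_filter.mpr ⟨Finset.mem_univ i, hc.1⟩)
    have p2 : (∑ i ∈ Finset.univ.filter (fun i => ¬ Xp A i), A i u) = a u := by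
      rw [hadef]
      refine (Finset.sum_subset ?_ ?_).symm
      · intro i hi
        obtain ⟨-, h1, h2⟩ := Finset.mem_filter.mp hi
        exact Finset.mem_filter.mpr ⟨Finset.mem_univ i, fun hc => h2 hc.2⟩
      · intro i hi hni
        by_contra hne
        have hrp : Rp A i := ⟨u, hne⟩
        have hnx := (Finset.mem_filter.mp hi).2
        exact hni (Finset.mem_filter.mpr ⟨Finset.mem_univ i,
          hrp, fun hcp => hnx ⟨hrp, hcp⟩⟩)
    rw [p1, p2]
  -- row sums
  have hrv : ∀ v, Xp A v → (∑ j, A v j) = 1 + b v := by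
    intro v hv
    rw [← Finset.sum_filter_add_sum_filter_not Finset.univ (fun j => Xp A j) (fun j => A v j)]
    have p1 : (∑ j ∈ Finset.univ.filter (fun j => Xp A j), A v j) = 1 := by
      have e1 : ∀ j ∈ Finset.univ.filter (fun j => Xp A j), A v j = Ax A v j := by
        intro j hj
        rw [Ax_apply, if_pos ⟨hv, (Finset.mem_filter.mp hj).2⟩]
      rw [Finset.sum_congr rfl e1,
        Finset.sum_subset (Finset.filter_subset _ _) (fun j _ hj => ?_)]
      · exact rowsum_one h01 hK hA v hv
      · rw [Ax_apply, if_neg]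
        intro hc
        exact hj (Finset.mem_filter.mpr ⟨Finset.mem_univ j, hc.2⟩)
    have p2 : (∑ j ∈ Finset.univ.filter (fun j => ¬ Xp A j), A v j) = b v := by
      rw [hbdef]
      refine (Finset.sum_subset ?_ ?_).symm
      · intro j hj
        obtain ⟨-, h1, h2⟩ := Finset.mem_filter.mp hj
        exact Finset.mem_filter.mpr ⟨Finset.mem_univ j, fun hc => h2 hc.1⟩
      · intro j hj hnj
        by_contra hne
        have hcp : Cp A j := ⟨v, hne⟩
        have hnx := (Finset.mem_filter.mp hj).2
        exact hnj (Finset.mem_filter.mpr ⟨Finset.mem_univ j,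
          hcp, fun hrp => hnx ⟨hrp, hcp⟩⟩)
    rw [p1, p2]
  set p := (SS.card : ℤ) with hpdef
  set q := (TS.card : ℤ) with hqdef
  set x := (XS.card : ℤ) with hxdef
  have hann : ∀ u, 0 ≤ a u := fun u => Finset.sum_nonneg fun i _ => nonneg h01 i u
  have hbnn : ∀ v, 0 ≤ b v := fun v => Finset.sum_nonneg fun j _ => nonneg h01 v j
  have hap : ∀ u, a u ≤ p := by
    intro u
    rw [hadef, hpdef]
    calc (∑ i ∈ SS, A i u) ≤ ∑ i ∈ SS, 1 :=
          Finset.sum_le_sum fun i _ => le_one h01 i u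
      _ = (SS.card : ℤ) := by simp
  have hbq : ∀ v, b v ≤ q := by
    intro v
    rw [hbdef, hqdef]
    calc (∑ j ∈ TS, A v j) ≤ ∑ j ∈ TS, 1 :=
          Finset.sum_le_sum fun j _ => le_one h01 v j
      _ = (TS.card : ℤ) := by simp
  -- E identity
  have hE : (∑ i, ∑ j, A i j) = ∑ v, ∑ u, (∑ i, A i u) * P u v * (∑ j, A v j) := by
    calc (∑ i, ∑ j, A i j) = ∑ i, ∑ j, ∑ v, ∑ u, A i u * P u v * A v j :=
          Finset.sum_congr rfl fun i _ => Finset.sum_congr rfl fun j _ => hAPA i j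
      _ = ∑ v, ∑ u, ∑ i, ∑ j, A i u * P u v * A v j :=
          sum_swap4 Finset.univ Finset.univ Finset.univ Finset.univ _
      _ = ∑ v, ∑ u, (∑ i, A i u) * P u v * (∑ j, A v j) := by
          apply Finset.sum_congr rfl; intro v _
          apply Finset.sum_congr rfl; intro u _
          exact (sum_mul_sum Finset.univ Finset.univ _ _ _).symm
  -- mass
  have hmass : (∑ v, ∑ u, P u v) = x := by
    rw [← Finset.sum_filter_add_sum_filter_not Finset.univ (fun v => Xp A v)
      (fun v => ∑ u, P u v)]
    have m1 : (∑ v ∈ Finset.univ.filter (fun v => Xp A v), ∑ u, P u v)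
        = ∑ v ∈ Finset.univ.filter (fun v => Xp A v), (1 : ℤ) := by
      apply Finset.sum_congr rfl
      intro v hv
      exact Pcol h01 hK hA (K - 2) v (Finset.mem_filter.mp hv).2
    have m2 : (∑ v ∈ Finset.univ.filter (fun v => ¬ Xp A v), ∑ u, P u v) = 0 := by
      apply Finset.sum_eq_zero
      intro v hv
      apply Finset.sum_eq_zero
      intro u _
      by_contra hne
      exact (Finset.mem_filter.mp hv).2 (hPsupp u v hne).2
    rw [m1, m2, add_zero, hxdef, hXSdef]
    simp
  -- budget
  have hbudget : (∑ v, ∑ u, a u * P u v * b v) ≤ p * q := by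
    have e1 : (∑ v, ∑ u, a u * P u v * b v)
        = ∑ v, ∑ u, ∑ i ∈ SS, ∑ j ∈ TS, A i u * P u v * A v j := by
      apply Finset.sum_congr rfl; intro v _
      apply Finset.sum_congr rfl; intro u _
      exact sum_mul_sum SS TS _ _ _
    have e2 : (∑ v, ∑ u, ∑ i ∈ SS, ∑ j ∈ TS, A i u * P u v * A v j)
        = ∑ i ∈ SS, ∑ j ∈ TS, ∑ v, ∑ u, A i u * P u v * A v j :=
      (sum_swap4 SS TS Finset.univ Finset.univ _).symm
    rw [e1, e2]
    have e3 : ∀ i ∈ SS, ∀ j ∈ TS, (∑ v, ∑ u, A i u * P u v * A v j) ≤ 1 := by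
      intro i _ j _
      rw [← hAPA i j]
      exact le_one h01 i j
    calc (∑ i ∈ SS, ∑ j ∈ TS, ∑ v, ∑ u, A i u * P u v * A v j)
        ≤ ∑ i ∈ SS, ∑ j ∈ TS, (1 : ℤ) :=
          Finset.sum_le_sum fun i hi => Finset.sum_le_sum fun j hj => e3 i hi j hj
      _ = p * q := by rw [hpdef, hqdef]; simp [mul_comm]
  set Q := max p q with hQdef
  set m := min p q with hmdef
  have hpnn : (0 : ℤ) ≤ p := by rw [hpdef]; exact Int.natCast_nonneg _
  have hqnn : (0 : ℤ) ≤ q := by rw [hqdef]; exact Int.natCast_nonneg _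
  have hQnn : (0 : ℤ) ≤ Q := le_trans hpnn (le_max_left p q)
  have hpq : p * q = Q * m := by
    rw [hQdef, hmdef]
    rcases le_total p q with h | h
    · rw [max_eq_right h, min_eq_left h, mul_comm]
    · rw [max_eq_left h, min_eq_right h]
  -- per-term inequality
  have hterm : ∀ v u, Q * ((∑ i, A i u) * P u v * (∑ j, A v j))
      ≤ Q * (1 + Q) * P u v + (1 + Q) * (a u * P u v * b v) := by
    intro v u
    rcases Classical.em (P u v = 0) with h | h
    · rw [h]; ring_nf; rfl
    · obtain ⟨hxu, hxv⟩ := hPsupp u v h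
      rw [hcu u hxu, hrv v hxv]
      have key : 0 ≤ (Q - a u) * (Q - b v) * P u v :=
        mul_nonneg (mul_nonneg (by linarith [hap u, le_max_left p q])
          (by linarith [hbq v, le_max_right p q])) (hPnn u v)
      nlinarith [key, hPnn u v]
  -- summing
  have hsum : Q * (∑ v, ∑ u, (∑ i, A i u) * P u v * (∑ j, A v j))
      ≤ Q * (1 + Q) * x + (1 + Q) * (p * q) := by
    calc Q * (∑ v, ∑ u, (∑ i, A i u) * P u v * (∑ j, A v j))
        = ∑ v, ∑ u, Q * ((∑ i, A i u) * P u v * (∑ j, A v j)) := by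
          rw [Finset.mul_sum]
          exact Finset.sum_congr rfl fun v _ => Finset.mul_sum _ _ _
      _ ≤ ∑ v, ∑ u, (Q * (1 + Q) * P u v + (1 + Q) * (a u * P u v * b v)) :=
          Finset.sum_le_sum fun v _ => Finset.sum_le_sum fun u _ => hterm v u
      _ = Q * (1 + Q) * (∑ v, ∑ u, P u v)
            + (1 + Q) * (∑ v, ∑ u, a u * P u v * b v) := by
          rw [Finset.mul_sum, Finset.mul_sum, ← Finset.sum_add_distrib]
          apply Finset.sum_congr rfl; intro v _
          rw [Finset.mul_sum, Finset.mul_sum, ← Finset.sum_add_distrib]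
      _ ≤ Q * (1 + Q) * x + (1 + Q) * (p * q) := by
          rw [hmass]
          have : (1 + Q) * (∑ v, ∑ u, a u * P u v * b v) ≤ (1 + Q) * (p * q) :=
            mul_le_mul_of_nonneg_left hbudget (by linarith)
          linarith
  -- main integer bound
  have hfc : (fcount A : ℤ) = ∑ v, ∑ u, (∑ i, A i u) * P u v * (∑ j, A v j) := by
    rw [fcount_cast h01, hE]
  have hmain : (fcount A : ℤ) ≤ (1 + Q) * (x + m) := by
    rcases lt_or_eq_of_le hQnn with hQpos | hQ0
    · have h1 : Q * (fcount A : ℤ) ≤ Q * ((1 + Q) * (x + m)) := by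
        rw [hfc]
        calc Q * (∑ v, ∑ u, (∑ i, A i u) * P u v * (∑ j, A v j))
            ≤ Q * (1 + Q) * x + (1 + Q) * (p * q) := hsum
          _ = Q * ((1 + Q) * (x + m)) := by rw [hpq]; ring
      exact le_of_mul_le_mul_left h1 hQpos
    · -- Q = 0, hence p = q = 0, a = b = 0
      have hp0 : p = 0 := le_antisymm (by rw [hQ0]; exact le_max_left p q) hpnn
      have hq0 : q = 0 := le_antisymm (by rw [hQ0]; exact le_max_right p q) hqnn
      have ha0 : ∀ u, a u = 0 := fun u => le_antisymm (le_trans (hap u) (le_of_eq hp0)) (hann u)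
      have hb0 : ∀ v, b v = 0 := fun v => le_antisymm (le_trans (hbq v) (le_of_eq hq0)) (hbnn v)
      have hterm0 : ∀ v u, (∑ i, A i u) * P u v * (∑ j, A v j) = P u v := by
        intro v u
        rcases Classical.em (P u v = 0) with h | h
        · rw [h]; ring
        · obtain ⟨hxu, hxv⟩ := hPsupp u v h
          rw [hcu u hxu, hrv v hxv, ha0, hb0]
          ring
      have : (fcount A : ℤ) = x := by
        rw [hfc, Finset.sum_congr rfl fun v _ => Finset.sum_congr rfl fun u _ => hterm0 v u,
          hmass]
      rw [this, ← hQ0]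
      have hm0 : m = 0 := by rw [hmdef, hp0, hq0]; simp
      rw [hm0]
      linarith
  -- cardinality bound
  have hcard : XS.card + SS.card + TS.card ≤ n := by
    have d1 : Disjoint XS SS := by
      rw [Finset.disjoint_left]
      intro i hi hj
      exact (Finset.mem_filter.mp hj).2.2 (Finset.mem_filter.mp hi).2.2
    have d2 : Disjoint (XS ∪ SS) TS := by
      rw [Finset.disjoint_left]
      intro i hi hj
      rcases Finset.mem_union.mp hi with h | h
      · exact (Finset.mem_filter.mp hj).2.2 (Finset.mem_filter.mp h).2.1
      · exact (Finset.mem_filter.mp hj).2.2 (Finset.mem_filter.mp h).2.1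
    calc XS.card + SS.card + TS.card
        = (XS ∪ SS).card + TS.card := by rw [Finset.card_union_of_disjoint d1]
      _ = (XS ∪ SS ∪ TS).card := (Finset.card_union_of_disjoint d2).symm
      _ ≤ (Finset.univ : Finset (Fin n)).card := Finset.card_le_univ _
      _ = n := by simp
  -- conclude in ℕ
  have hnat : fcount A ≤ (1 + max SS.card TS.card) * (XS.card + min SS.card TS.card) := by
    have hcast : ((1 + max SS.card TS.card) * (XS.card + min SS.card TS.card) : ℤ)
        = (1 + Q) * (x + m) := by
      push_cast
      rw [hQdef, hmdef, hpdef, hqdef, hxdef]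
    have := hmain
    rw [← hcast] at this
    exact_mod_cast this
  have hfinal : (1 + max SS.card TS.card) * (XS.card + min SS.card TS.card)
      ≤ (n + 1) ^ 2 / 4 := by
    apply prod_le
    have := max_add_min SS.card TS.card
    omega
  rw [gamma_eq]
  exact le_trans hnat hfinal

end main

end Stmt13Aux

theorem stmt13 {n k : ℕ} (hk : 2 ≤ k) (A : Matrix (Fin n) (Fin n) ℤ)
    (h01 : IsZeroOne A) (hA : A ^ k = A) :
    fcount A ≤ gamma n := by
  have hAK : A ^ (2 * k - 1) = A := by
    have h1 : 2 * k - 1 = (k - 1) + k := by omega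
    rw [h1, pow_add, hA]
    have h2 : A ^ (k - 1) * A = A ^ k := by
      rw [← pow_succ, show k - 1 + 1 = k by omega]
    rw [h2, hA]
  exact Stmt13Aux.main (fun i j => h01 i j) (by omega) hAK
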